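/- Let R be a reduced irreducible root system, β a long root, α a short root and γ any root such that ⟨α,β∨⟩ > 0 and ⟨γ,β∨⟩ > 0. Then ⟨γ,α∨⟩ ≥ 0; moreover, if γ is short and α + γ ≠ β, then ⟨γ,α∨⟩ > 0. -/
import Mathlib


open scoped RealInnerProductSpace Classical

noncomputable section

variable {E : Type*} [NormedAddCommGroup E] [InnerProductSpace ℝ E]

/-- A reduced irreducible root system in a Euclidean space. -/
structure RRS (E : Type*) [NormedAddCommGroup E] [InnerProductSpace ℝ E] : Type _ where
  roots : Finset E
  nonempty : roots.Nonempty
  span_eq : Submodule.span ℝ (roots : Set E) = ⊤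
  ne_zero : ∀ α ∈ roots, α ≠ 0
  reflect_mem : ∀ α ∈ roots, ∀ β ∈ roots, β - (2 * ⟪β, α⟫ / ⟪α, α⟫) • α ∈ roots
  pairing_int : ∀ α ∈ roots, ∀ β ∈ roots, ∃ n : ℤ, 2 * ⟪β, α⟫ / ⟪α, α⟫ = (n : ℝ)
  reduced : ∀ α ∈ roots, ∀ c : ℝ, c • α ∈ roots → c = 1 ∨ c = -1
  irreducible : ∀ s : Finset E, s ⊆ roots → s.Nonempty →
      (∀ α ∈ s, ∀ β ∈ roots, β ∉ s → ⟪α, β⟫ = 0) → s = roots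

/-- The Cartan pairing `⟨β, α∨⟩ = 2(β,α)/(α,α)`. -/
def pairR (β α : E) : ℝ := 2 * ⟪β, α⟫ / ⟪α, α⟫

/-- The orthogonal reflection in (the hyperplane orthogonal to) `α`. -/
def reflMap (α x : E) : E := x - pairR x α • α

/-- `Δ` is a base of simple roots, with `coeff α γ` the coordinates of roots. -/
def IsBase (R : RRS E) (Δ : Finset E) (coeff : E → E → ℤ) : Prop :=
  Δ ⊆ R.roots ∧ LinearIndependent ℝ (fun γ : (Δ : Set E) => (γ : E)) ∧
    (∀ α ∈ R.roots, α = ∑ γ ∈ Δ, (coeff α γ : ℝ) • γ) ∧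
    (∀ α ∈ R.roots, (∀ γ ∈ Δ, 0 ≤ coeff α γ) ∨ (∀ γ ∈ Δ, coeff α γ ≤ 0))

/-- Positivity (all simple-root coordinates nonnegative). -/
def IsPos (Δ : Finset E) (coeff : E → E → ℤ) (α : E) : Prop := ∀ γ ∈ Δ, 0 ≤ coeff α γ

/-- Height: the sum of the simple-root coordinates. -/
def htZ (Δ : Finset E) (coeff : E → E → ℤ) (α : E) : ℤ := ∑ γ ∈ Δ, coeff α γ

/-- Partial height: the sum of coordinates over simple roots satisfying `P`. -/
def htP (Δ : Finset E) (coeff : E → E → ℤ) (P : E → Prop) (α : E) : ℤ :=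
  ∑ γ ∈ Δ.filter P, coeff α γ

/-- The result of applying the word of reflections `s_{γ_p} ⋯ s_{γ_1}` to `x`,
where `l = [γ_1, …, γ_p]`. -/
def wordMap (l : List E) (x : E) : E := l.foldl (fun y γ => reflMap γ y) x

/-- The chain of roots `α^(i) = s_{γ_1} ⋯ s_{γ_{i-1}} γ_i` (0-based `i`). -/
def chainRoot (l : List E) (i : ℕ) : E := wordMap ((l.take i).reverse) (l.getD i 0)


set_option maxHeartbeats 2000000 in
/-- if `β` is long, `α` is short, `⟨α,β∨⟩ > 0` and `⟨γ,β∨⟩ > 0`, then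
`⟨γ,α∨⟩ ≥ 0`; moreover if `γ` is short and `α + γ ≠ β` then `⟨γ,α∨⟩ > 0`. -/
theorem stmt3 (R : RRS E) (Λ a : ℝ) (hΛ : Λ = 2 ∨ Λ = 3) (ha : 0 < a)
    (hlen : ∀ α ∈ R.roots, ⟪α, α⟫ = a ∨ ⟪α, α⟫ = Λ * a)
    (β α γ : E) (hβ : β ∈ R.roots) (hα : α ∈ R.roots) (hγ : γ ∈ R.roots)
    (hβl : ⟪β, β⟫ = Λ * a) (hαs : ⟪α, α⟫ = a)
    (h1 : 0 < pairR α β) (h2 : 0 < pairR γ β) :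
    0 ≤ pairR γ α ∧ ((⟪γ, γ⟫ = a ∧ α + γ ≠ β) → 0 < pairR γ α) := by
  obtain ⟨p, hp⟩ := R.pairing_int β hβ α hα
  obtain ⟨k, hk⟩ := R.pairing_int β hβ γ hγ
  obtain ⟨m, hm⟩ := R.pairing_int α hα γ hγ
  have hΛ2 : (2:ℝ) ≤ Λ := by rcases hΛ with h | h <;> norm_num [h]
  have hΛa : (0:ℝ) < Λ * a := by nlinarith
  have hpv : pairR α β = (p:ℝ) := hp
  have hkv : pairR γ β = (k:ℝ) := hk
  have hmv : pairR γ α = (m:ℝ) := hm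
  have hp1 : (1:ℝ) ≤ (p:ℝ) := by
    rw [hpv] at h1; exact_mod_cast h1
  have hk1 : (1:ℝ) ≤ (k:ℝ) := by
    rw [hkv] at h2; exact_mod_cast h2
  have hiαβ : ⟪α, β⟫ = (p:ℝ) * (Λ * a) / 2 := by
    have h := hpv; rw [pairR, hβl] at h
    field_simp at h; linarith
  have hiγβ : ⟪γ, β⟫ = (k:ℝ) * (Λ * a) / 2 := by
    have h := hkv; rw [pairR, hβl] at h
    field_simp at h; linarith
  have hiγα : ⟪γ, α⟫ = (m:ℝ) * a / 2 := by
    have h := hmv; rw [pairR, hαs] at h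
    field_simp at h; linarith
  -- Cauchy–Schwarz forces p = 1
  have hcsαβ := real_inner_mul_inner_self_le α β
  rw [hαs, hβl, hiαβ] at hcsαβ
  have hple : p ≤ 1 := by
    by_contra hgt
    push_neg at hgt
    have h2p : (2:ℝ) ≤ (p:ℝ) := by exact_mod_cast hgt
    have e1 : Λ * a ≤ (p:ℝ) * (Λ * a) / 2 := by nlinarith
    have e2 := mul_self_le_mul_self (le_of_lt hΛa) e1
    nlinarith [mul_pos ha ha]
  have hpeq : (p:ℝ) = 1 := by
    have h' : p = 1 := le_antisymm hple (by exact_mod_cast hp1)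
    exact_mod_cast h'
  have hiαβ' : ⟪α, β⟫ = Λ * a / 2 := by rw [hiαβ, hpeq]; ring
  -- the auxiliary vector δ = β - α is short
  have hc : ⟪β, α⟫ = Λ * a / 2 := by rw [real_inner_comm]; exact hiαβ'
  have hδδ : ⟪β - α, β - α⟫ = a := by
    rw [real_inner_sub_sub_self, hβl, hαs, hc]; ring
  have hγδ : ⟪γ, β - α⟫ = ((k:ℝ) * Λ - (m:ℝ)) * a / 2 := by
    rw [inner_sub_right, hiγβ, hiγα]; ring
  have hcsγδ := real_inner_mul_inner_self_le γ (β - α)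
  rw [hδδ, hγδ] at hcsγδ
  have hγγ : ⟪γ, γ⟫ ≤ Λ * a := by
    rcases hlen γ hγ with h | h <;> rw [h] <;> nlinarith
  -- first claim : m ≥ 0
  have hm0 : 0 ≤ (m:ℝ) := by
    by_contra hneg
    push_neg at hneg
    have hm1 : (m:ℝ) ≤ -1 := by
      have h' : m < 0 := by exact_mod_cast hneg
      have h'' : m ≤ -1 := by omega
      exact_mod_cast h''
    have hkΛ : Λ ≤ (k:ℝ) * Λ := by
      nlinarith [mul_nonneg (by linarith : (0:ℝ) ≤ (k:ℝ) - 1) (by linarith : (0:ℝ) ≤ Λ)]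
    have hkm : Λ + 1 ≤ (k:ℝ) * Λ - (m:ℝ) := by linarith
    have hpos : (0:ℝ) ≤ (Λ + 1) * a / 2 := by positivity
    have e1 : (Λ + 1) * a / 2 ≤ ((k:ℝ) * Λ - (m:ℝ)) * a / 2 := by nlinarith
    have e2 := mul_self_le_mul_self hpos e1
    have e3 : (((k:ℝ) * Λ - (m:ℝ)) * a / 2) * (((k:ℝ) * Λ - (m:ℝ)) * a / 2) ≤ (Λ * a) * a :=
      le_trans hcsγδ (by nlinarith)
    rcases hΛ with h | h <;> subst h <;> nlinarith [mul_pos ha ha]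
  refine ⟨by rw [hmv]; exact hm0, ?_⟩
  rintro ⟨hγs, hne⟩
  rw [hmv]
  by_contra hnp
  push_neg at hnp
  have hmz : (m:ℝ) = 0 := le_antisymm hnp hm0
  rw [hγs, hmz] at hcsγδ
  rw [hmz] at hγδ
  rcases hΛ with h | h
  · -- Λ = 2 : forces k = 1 and then γ = β - α, i.e. α + γ = β
    subst h
    have hkle : k ≤ 1 := by
      by_contra hgt
      push_neg at hgt
      have h2k : (2:ℝ) ≤ (k:ℝ) := by exact_mod_cast hgt
      have e1 : 2 * a ≤ (k:ℝ) * a := by nlinarith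
      have e2 := mul_self_le_mul_self (by positivity : (0:ℝ) ≤ 2 * a) e1
      nlinarith [mul_pos ha ha]
    have hkeq : (k:ℝ) = 1 := by
      have h' : k = 1 := le_antisymm hkle (by exact_mod_cast hk1)
      exact_mod_cast h' 
    rw [hkeq] at hγδ
    have hγδ' : ⟪γ, β - α⟫ = a := by rw [hγδ]; ring
    have hz : ⟪γ - (β - α), γ - (β - α)⟫ = 0 := by
      rw [real_inner_sub_sub_self, hγs, hδδ, hγδ']; ring
    have hz0 : γ - (β - α) = 0 := by
      simpa using (inner_self_eq_zero (𝕜 := ℝ) (x := γ - (β - α))).mp hz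
    have hγeq : γ = β - α := sub_eq_zero.mp hz0
    apply hne
    rw [hγeq]; abel
  · -- Λ = 3 : impossible
    subst h
    have e1 : (3:ℝ) * a / 2 ≤ ((k:ℝ) * 3 - 0) * a / 2 := by nlinarith
    have e2 := mul_self_le_mul_self (by positivity : (0:ℝ) ≤ (3:ℝ) * a / 2) e1
    nlinarith [mul_pos ha ha]

end
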